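/- Let v_1,...,v_m ∈ ℤⁿ be a spanning configuration that is not 2-regular: there exists a maximal linearly independent subset {v_{i_1},...,v_{i_n}} such that ℤⁿ/⟨v_{i_1},...,v_{i_n}⟩ is not 2-torsion. Then for every integer q ≥ 2 there exists a ∈ (1/q)ℤⁿ such that for every x ∈ ℤⁿ there is some j with |⟨a + x, v_j⟩| ≥ 1. -/

import Mathlib

open Matrix

/-- Auxiliary: the final integer-arithmetic step. -/
lemma stmt14_finale (n : ℕ) (A : Matrix (Fin n) (Fin n) ℤ) (p₀ : Fin n) (e : ℕ)
    (hdvd : ∀ m : ℤ, (∃ x : Fin n → ℤ, A.mulVec x = Pi.single p₀ m) → (e : ℤ) ∣ m)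
    (p : ℕ) (hp : 0 < p) (x₀ : Fin n → ℤ) (N g r : ℤ)
    (hx₀ : A.mulVec x₀ = Pi.single p₀ N) (hN : N = (p : ℤ) * g + r)
    (hr0 : 0 ≤ r) (hrp : r < (p : ℤ))
    (hg : ¬ (e : ℤ) ∣ g) (hg1 : r ≠ 0 → ¬ (e : ℤ) ∣ (g + 1)) :
    ∀ x : Fin n → ℤ, ∃ k, (p : ℤ) ≤ |A.mulVec (x₀ + (p : ℤ) • x) k| := by
  intro x
  by_contra hcon
  push_neg at hcon
  set w := A.mulVec x with hw
  have hppos : (0 : ℤ) < (p : ℤ) := by exact_mod_cast hp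
  have hu : ∀ k, A.mulVec (x₀ + (p : ℤ) • x) k = (Pi.single p₀ N : Fin n → ℤ) k + (p : ℤ) * w k := by
    intro k
    rw [Matrix.mulVec_add, Matrix.mulVec_smul, hx₀]
    simp [hw]
  -- off-diagonal coordinates vanish
  have hoff : ∀ k, k ≠ p₀ → w k = 0 := by
    intro k hk
    have h1 := hcon k
    rw [hu k, Pi.single_eq_of_ne hk, zero_add, abs_mul, abs_of_pos hppos] at h1
    have h2 : |w k| < 1 := by
      by_contra h3
      push_neg at h3
      have h4 : (p : ℤ) * 1 ≤ (p : ℤ) * |w k| :=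
        mul_le_mul_of_nonneg_left h3 (le_of_lt hppos)
      linarith
    exact Int.abs_lt_one_iff.mp h2
  -- the p₀ coordinate
  have h1 := hcon p₀
  rw [hu p₀, Pi.single_eq_same, hN] at h1
  have habs := abs_lt.mp h1
  set G : ℤ := g + w p₀ with hG
  have hGe : (p : ℤ) * g + r + (p : ℤ) * w p₀ = (p : ℤ) * G + r := by ring
  rw [hGe] at habs
  have hG0 : G ≤ 0 := by nlinarith [habs.1, habs.2]
  have hG1 : -1 ≤ G := by nlinarith [habs.1, habs.2]
  have hsingle : A.mulVec x = Pi.single p₀ (w p₀) := by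
    funext k
    by_cases hk : k = p₀
    · subst hk; simp [hw]
    · rw [Pi.single_eq_of_ne hk]
      exact hoff k hk
  have hdw : (e : ℤ) ∣ w p₀ := hdvd (w p₀) ⟨x, hsingle⟩
  interval_cases G
  · -- G = -1 : w p₀ = -g - 1, and r must be positive
    have hr : r ≠ 0 := by
      intro h
      rw [h] at habs
      have := habs.1
      nlinarith
    have hwp : w p₀ = -(g + 1) := by omega
    rw [hwp, dvd_neg] at hdw
    exact hg1 hr hdw
  · -- G = 0 : w p₀ = -g
    have hwp : w p₀ = -g := by omega
    rw [hwp, dvd_neg] at hdw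
    exact hg hdw

/-- Auxiliary: construction of the witness `x₀` given a prime `p`. -/
lemma stmt14_core (n : ℕ) (A : Matrix (Fin n) (Fin n) ℤ) (p₀ : Fin n) (e : ℕ) (he3 : 3 ≤ e)
    (hex : ∃ xe : Fin n → ℤ, A.mulVec xe = Pi.single p₀ (e : ℤ))
    (hdvd : ∀ m : ℤ, (∃ x : Fin n → ℤ, A.mulVec x = Pi.single p₀ m) → (e : ℤ) ∣ m)
    (p : ℕ) (hp : p.Prime) :
    ∃ x₀ : Fin n → ℤ, ∀ x : Fin n → ℤ, ∃ k, (p : ℤ) ≤ |A.mulVec (x₀ + (p : ℤ) • x) k| := by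
  obtain ⟨xe, hxe⟩ := hex
  have he0 : 0 < e := by omega
  by_cases hpe : p ∣ e
  · -- case p ∣ e : take x₀ := xe, N = e, g = e/p, r = 0
    have hge1 : 1 ≤ e / p := Nat.one_le_div_iff hp.pos |>.mpr (Nat.le_of_dvd he0 hpe)
    have hlt : e / p < e := Nat.div_lt_self he0 hp.one_lt
    have hmul : p * (e / p) = e := Nat.mul_div_cancel' hpe
    refine ⟨xe, stmt14_finale n A p₀ e hdvd p hp.pos xe (e : ℤ) ((e / p : ℕ) : ℤ) 0 hxe
      ?_ le_rfl (by exact_mod_cast hp.pos) ?_ (by simp)⟩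
    · rw [add_zero, ← Nat.cast_mul, hmul]
    · intro hd
      have h1 : ((e : ℤ)) ≤ ((e / p : ℕ) : ℤ) :=
        Int.le_of_dvd (by exact_mod_cast hge1) hd
      have : e ≤ e / p := by exact_mod_cast h1
      omega
  · -- case p ∤ e : Bézout
    have cop : Nat.Coprime p e := (Nat.Prime.coprime_iff_not_dvd hp).mpr hpe
    have hbz : (1 : ℤ) = (p : ℤ) * Nat.gcdA p e + (e : ℤ) * Nat.gcdB p e := by
      have := Nat.gcd_eq_gcd_ab p e
      rwa [cop] at this
    set sA := Nat.gcdA p e with hsA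
    set sB := Nat.gcdB p e with hsB
    have he2 : (2 : ℤ) < (e : ℤ) := by exact_mod_cast he3
    -- choose r
    by_cases hcase : (e : ℤ) ∣ ((p : ℤ) - 1)
    · -- r = 2
      have hp2 : (2 : ℤ) < (p : ℤ) := by
        have h1 : (1 : ℤ) ≤ (p : ℤ) - 1 := by
          have := hp.two_le
          have : (2 : ℤ) ≤ (p : ℤ) := by exact_mod_cast this
          by_contra h
          push_neg at h
          have h0 : (p : ℤ) - 1 = 0 ∨ (p:ℤ) - 1 < 0 := by omega
          rcases h0 with h0 | h0
          · omega
          · omega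
        have h2 : (e : ℤ) ≤ (p : ℤ) - 1 := Int.le_of_dvd (by omega) hcase
        omega
      refine ⟨(2 * sB) • xe, stmt14_finale n A p₀ e hdvd p hp.pos _ ((2 * sB) * e)
        (-(2 : ℤ) * sA) 2 ?_ (by linear_combination (-2 : ℤ) * hbz) (by norm_num) hp2 ?_ ?_⟩
      · rw [Matrix.mulVec_smul, hxe, ← Pi.single_smul, smul_eq_mul]
      · -- ¬ e ∣ -2 sA
        intro hd
        have key : (-(2:ℤ) * sA) * p + (-2 * sB) * (e : ℤ) = -2 := by
          linear_combination (2 : ℤ) * hbz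
        have h1 : (e : ℤ) ∣ (-(2:ℤ) * sA) * p := hd.mul_right _
        have h2 : (e : ℤ) ∣ (-2 * sB) * (e : ℤ) := dvd_mul_left _ _
        have h3 : (e : ℤ) ∣ (-2 : ℤ) := by rw [← key]; exact dvd_add h1 h2
        have h4 : (e : ℤ) ∣ (2 : ℤ) := (dvd_neg.mp h3)
        have := Int.le_of_dvd (by norm_num) h4
        omega
      · -- ¬ e ∣ (-2 sA + 1)
        intro _ hd
        have key : (-(2:ℤ) * sA + 1) * p + (-2 * sB) * (e : ℤ) = (p : ℤ) - 2 := by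
          linear_combination (2 : ℤ) * hbz
        have h1 : (e : ℤ) ∣ (-(2:ℤ) * sA + 1) * p := hd.mul_right _
        have h2 : (e : ℤ) ∣ (-2 * sB) * (e : ℤ) := dvd_mul_left _ _
        have h3 : (e : ℤ) ∣ (p : ℤ) - 2 := by rw [← key]; exact dvd_add h1 h2
        have h5 : (e : ℤ) ∣ (1 : ℤ) := by
          have := dvd_sub hcase h3
          simpa using this
        have := Int.le_of_dvd (by norm_num) h5
        omega
    · -- r = 1
      have hp1 : (1 : ℤ) < (p : ℤ) := by exact_mod_cast hp.one_lt
      refine ⟨sB • xe, stmt14_finale n A p₀ e hdvd p hp.pos _ (sB * e)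
        (-sA) 1 ?_ (by linear_combination (-1 : ℤ) * hbz) (by norm_num) hp1 ?_ ?_⟩
      · rw [Matrix.mulVec_smul, hxe, ← Pi.single_smul, smul_eq_mul]
      · intro hd
        have key : (-sA) * p + (-sB) * (e : ℤ) = -1 := by
          linear_combination (1 : ℤ) * hbz
        have h1 : (e : ℤ) ∣ (-sA) * p := hd.mul_right _
        have h2 : (e : ℤ) ∣ (-sB) * (e : ℤ) := dvd_mul_left _ _
        have h3 : (e : ℤ) ∣ (-1 : ℤ) := by rw [← key]; exact dvd_add h1 h2
        have h4 : (e : ℤ) ∣ (1 : ℤ) := (dvd_neg.mp h3)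
        have := Int.le_of_dvd (by norm_num) h4
        omega
      · intro _ hd
        have key : (-sA + 1) * p + (-sB) * (e : ℤ) = (p : ℤ) - 1 := by
          linear_combination (1 : ℤ) * hbz
        have h1 : (e : ℤ) ∣ (-sA + 1) * p := hd.mul_right _
        have h2 : (e : ℤ) ∣ (-sB) * (e : ℤ) := dvd_mul_left _ _
        have h3 : (e : ℤ) ∣ (p : ℤ) - 1 := by rw [← key]; exact dvd_add h1 h2
        exact hcase h3

/-- Auxiliary: if every `y` with `y ᵥ* B` integral has `2 y` integral, then `2 B⁻¹` is integral. -/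
lemma stmt14_dual (n : ℕ) (B : Matrix (Fin n) (Fin n) ℚ) (hB : IsUnit B.det)
    (hcon : ∀ (y : Fin n → ℚ) (c : Fin n → ℤ), ((y ᵥ* B) = fun i => (c i : ℚ)) →
      ∀ p₀ : Fin n, ∃ t : ℤ, (t : ℚ) = 2 * y p₀) :
    ∃ C : Matrix (Fin n) (Fin n) ℤ, ∀ j l, (C j l : ℚ) = 2 * B⁻¹ j l := by
  have hinv := Matrix.nonsing_inv_mul B hB
  have h : ∀ j p₀, ∃ t : ℤ, (t : ℚ) = 2 * B⁻¹ j p₀ := by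
    intro j
    refine hcon (fun l => B⁻¹ j l) (fun i => if j = i then 1 else 0) ?_
    funext i
    have h1 : ((fun l => B⁻¹ j l) ᵥ* B) i = (B⁻¹ * B) j i := by
      simp [Matrix.vecMul, Matrix.mul_apply, dotProduct]
    rw [h1, hinv, Matrix.one_apply]
    split <;> simp_all
  choose C hC using h
  exact ⟨Matrix.of C, hC⟩

theorem stmt14 (n m : ℕ) (v : Fin m → Fin n → ℤ)
    (hspan : Submodule.span ℝ (Set.range fun j => fun i => (v j i : ℝ)) = ⊤)
    (s : Fin n → Fin m)
    (hindep : LinearIndependent ℝ (fun k => fun i => (v (s k) i : ℝ)))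
    (hnot2t : ∃ x : Fin n → ℤ,
      (2 : ℤ) • x ∉ Submodule.span ℤ (Set.range (v ∘ s))) :
    ∀ q : ℕ, 2 ≤ q →
      ∃ a : Fin n → ℝ, (∀ i, ∃ k : ℤ, a i = (k : ℝ) / q) ∧
        ∀ x : Fin n → ℤ, ∃ j, 1 ≤ |∑ i, (a i + (x i : ℝ)) * (v j i : ℝ)| := by
  classical
  intro q hq
  set A : Matrix (Fin n) (Fin n) ℤ := Matrix.of fun k i => v (s k) i with hA
  -- determinant nonzero
  have hAR : IsUnit (A.map (Int.cast : ℤ → ℝ)) := by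
    rw [← Matrix.linearIndependent_rows_iff_isUnit]
    exact hindep
  have hdetcast : ∀ (R : Type) [inst : CommRing R],
      (A.map (Int.cast : ℤ → R)).det = ((A.det : ℤ) : R) := by
    intro R _
    rw [show A.map (Int.cast : ℤ → R) = (Int.castRingHom R).mapMatrix A from rfl,
      ← RingHom.map_det]
    rfl
  have hdetA : A.det ≠ 0 := by
    intro h
    have h2 : IsUnit ((A.map (Int.cast : ℤ → ℝ)).det) := (Matrix.isUnit_iff_isUnit_det _).mp hAR
    rw [hdetcast ℝ, h] at h2
    simp at h2
  set B : Matrix (Fin n) (Fin n) ℚ := A.map (Int.cast : ℤ → ℚ) with hB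
  have hdetB : IsUnit B.det := by
    rw [hB, hdetcast ℚ]
    simp [isUnit_iff_ne_zero, hdetA]
  have hinv := Matrix.nonsing_inv_mul B hdetB
  -- cast lemma
  have hcast : ∀ x : Fin n → ℤ, (fun i => ((A.mulVec x) i : ℚ)) = B.mulVec (fun i => (x i : ℚ)) := by
    intro x
    funext i
    show ((∑ j, A i j * x j : ℤ) : ℚ) = ∑ j, ((A i j : ℤ) : ℚ) * (x j : ℚ)
    push_cast
    rfl
  -- step: find y and p₀
  have hstep2 : ∃ (y : Fin n → ℚ) (c : Fin n → ℤ), ((y ᵥ* B) = fun i => (c i : ℚ)) ∧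
      ∃ p₀ : Fin n, ∀ t : ℤ, (t : ℚ) ≠ 2 * y p₀ := by
    by_contra hcon
    push_neg at hcon
    obtain ⟨C, hC⟩ := stmt14_dual n B hdetB hcon
    obtain ⟨z, hz⟩ := hnot2t
    apply hz
    rw [Submodule.mem_span_range_iff_exists_fun]
    refine ⟨(z ᵥ* C : Fin n → ℤ), ?_⟩
    funext i
    have goalQ : ((∑ k, (z ᵥ* C) k • (v ∘ s) k) i : ℤ) = ((2 : ℤ) • z) i → _ := id
    show (∑ k, (z ᵥ* C) k • (v ∘ s) k) i = ((2 : ℤ) • z) i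
    have hQ : ((∑ k, (z ᵥ* C) k • (v ∘ s) k) i : ℚ) = (((2 : ℤ) • z) i : ℚ) := by
      have lhs1 : ((∑ k, (z ᵥ* C) k • (v ∘ s) k) i : ℚ)
          = ∑ k, ((z ᵥ* C) k : ℚ) * (B k i) := by
        push_cast [Finset.sum_apply, Pi.smul_apply, smul_eq_mul]
        refine Finset.sum_congr rfl fun k _ => ?_
        simp [hB, Matrix.map_apply, hA]
      rw [lhs1]
      have hzC : ∀ k, ((z ᵥ* C) k : ℚ) = ∑ l, (z l : ℚ) * (2 * B⁻¹ l k) := by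
        intro k
        rw [show (z ᵥ* C) k = ∑ l, z l * C l k from rfl]
        push_cast
        exact Finset.sum_congr rfl fun l _ => by rw [hC l k]
      simp only [hzC]
      have swap : ∑ k : Fin n, (∑ l : Fin n, (z l : ℚ) * (2 * B⁻¹ l k)) * B k i
          = ∑ l : Fin n, (z l : ℚ) * 2 * (∑ k : Fin n, B⁻¹ l k * B k i) := by
        simp_rw [Finset.sum_mul, Finset.mul_sum]
        rw [Finset.sum_comm]
        exact Finset.sum_congr rfl fun l _ => Finset.sum_congr rfl fun k _ => by ring
      rw [swap]
      have hBB : ∀ l, (∑ k : Fin n, B⁻¹ l k * B k i) = if l = i then 1 else 0 := by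
        intro l
        rw [← Matrix.mul_apply, hinv, Matrix.one_apply]
      simp only [hBB, mul_ite, mul_one, mul_zero]
      rw [Finset.sum_ite_eq' Finset.univ i (fun l => (z l : ℚ) * 2)]
      simp [Pi.smul_apply]
      push_cast
      ring
    exact_mod_cast hQ
  obtain ⟨y, c, hyB, p₀, hy2⟩ := hstep2
  -- the lattice order e
  have hPex : ∃ mm : ℕ, 0 < mm ∧ ∃ x : Fin n → ℤ, A.mulVec x = Pi.single p₀ (mm : ℤ) := by
    refine ⟨A.det.natAbs, Int.natAbs_pos.mpr hdetA, ?_⟩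
    have hadj : A.mulVec ((A.adjugate).mulVec (Pi.single p₀ 1)) = Pi.single p₀ A.det := by
      rw [Matrix.mulVec_mulVec, Matrix.mul_adjugate, Matrix.smul_mulVec,
        Matrix.one_mulVec, ← Pi.single_smul, smul_eq_mul, mul_one]
    rcases le_or_gt 0 A.det with hd | hd
    · refine ⟨(A.adjugate).mulVec (Pi.single p₀ 1), ?_⟩
      rw [show ((A.det.natAbs : ℕ) : ℤ) = A.det from by omega]
      exact hadj
    · refine ⟨-((A.adjugate).mulVec (Pi.single p₀ 1)), ?_⟩
      rw [show ((A.det.natAbs : ℕ) : ℤ) = -A.det from by omega,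
        Matrix.mulVec_neg, hadj]
      funext i
      rw [Pi.neg_apply]
      by_cases hi : i = p₀
      · subst hi
        rw [Pi.single_eq_same, Pi.single_eq_same]
      · rw [Pi.single_eq_of_ne hi, Pi.single_eq_of_ne hi, neg_zero]
  set e : ℕ := Nat.find hPex with he
  obtain ⟨hepos, xe, hxe⟩ : 0 < e ∧ ∃ x : Fin n → ℤ, A.mulVec x = Pi.single p₀ (e : ℤ) :=
    Nat.find_spec hPex
  -- divisibility property of e
  have hdvd : ∀ mm : ℤ, (∃ x : Fin n → ℤ, A.mulVec x = Pi.single p₀ mm) → (e : ℤ) ∣ mm := by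
    intro mm ⟨x, hx⟩
    have hr0 : 0 ≤ mm % e := Int.emod_nonneg mm (by exact_mod_cast hepos.ne')
    have hrlt : mm % e < e := Int.emod_lt_of_pos mm (by exact_mod_cast hepos)
    by_cases hr : mm % e = 0
    · exact Int.dvd_of_emod_eq_zero hr
    exfalso
    have hxr : A.mulVec (x - (mm / e) • xe) = Pi.single p₀ (mm % e) := by
      rw [Matrix.mulVec_sub, Matrix.mulVec_smul, hx, hxe, ← Pi.single_smul, smul_eq_mul]
      funext i
      by_cases hi : i = p₀
      · subst hi
        simp [Pi.single_eq_same]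
        rw [Int.emod_def]
        ring
      · simp [Pi.single_eq_of_ne hi]
    have hPr : 0 < (mm % e).toNat ∧ ∃ x : Fin n → ℤ,
        A.mulVec x = Pi.single p₀ (((mm % e).toNat : ℕ) : ℤ) := by
      constructor
      · omega
      · refine ⟨x - (mm / e) • xe, ?_⟩
        rw [show ((((mm % (e : ℤ)).toNat : ℕ)) : ℤ) = mm % (e : ℤ) from by omega]
        exact hxr
    have hlt : (mm % e).toNat < e := by omega
    exact Nat.find_min hPex hlt hPr
  -- e ≥ 3
  have he3 : 3 ≤ e := by
    by_contra hlt
    push_neg at hlt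
    have hyxe : (e : ℚ) * y p₀ = ((∑ i, c i * xe i : ℤ) : ℚ) := by
      have h1 : y ⬝ᵥ (B.mulVec (fun i => (xe i : ℚ))) = (y ᵥ* B) ⬝ᵥ (fun i => (xe i : ℚ)) :=
        Matrix.dotProduct_mulVec _ _ _
      rw [← hcast xe, hxe] at h1
      rw [hyB] at h1
      have h2 : y ⬝ᵥ (fun i => ((Pi.single p₀ (e : ℤ) : Fin n → ℤ) i : ℚ)) = y p₀ * e := by
        simp [dotProduct, Pi.single_apply]
      rw [h2] at h1
      push_cast
      rw [mul_comm]
      rw [h1]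
      simp [dotProduct]
    interval_cases e
    · apply hy2 (2 * (∑ i, c i * xe i))
      push_cast
      push_cast at hyxe
      linarith
    · apply hy2 ((∑ i, c i * xe i))
      push_cast
      push_cast at hyxe
      linarith
  -- prime factor of q
  set p : ℕ := q.minFac with hpdef
  have hp : p.Prime := Nat.minFac_prime (by omega)
  have hpq : p ∣ q := Nat.minFac_dvd q
  obtain ⟨x₀, hx₀⟩ := stmt14_core n A p₀ e he3 ⟨xe, hxe⟩ hdvd p hp
  have hppos : (0 : ℝ) < (p : ℝ) := by exact_mod_cast hp.pos
  have hqpos : (0 : ℝ) < (q : ℝ) := by positivity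
  refine ⟨fun i => (x₀ i : ℝ) / p, ?_, ?_⟩
  · intro i
    refine ⟨x₀ i * ((q / p : ℕ) : ℤ), ?_⟩
    have hmul : p * (q / p) = q := Nat.mul_div_cancel' hpq
    have hqp0 : ((q / p : ℕ) : ℝ) ≠ 0 := by
      have : 0 < q / p := Nat.div_pos (Nat.minFac_le (by omega)) hp.pos
      positivity
    have hmulR : (p : ℝ) * ((q / p : ℕ) : ℝ) = (q : ℝ) := by exact_mod_cast hmul
    rw [Int.cast_mul, Int.cast_natCast]
    rw [← hmulR]
    field_simp
  · intro x
    obtain ⟨k, hk⟩ := hx₀ x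
    refine ⟨s k, ?_⟩
    have hsum : ∑ i, ((x₀ i : ℝ) / p + (x i : ℝ)) * (v (s k) i : ℝ)
        = ((A.mulVec (x₀ + (p : ℤ) • x) k : ℤ) : ℝ) / p := by
      rw [show (A.mulVec (x₀ + (p : ℤ) • x) k) = ∑ i, A k i * (x₀ i + (p : ℤ) * x i) from by
        simp [Matrix.mulVec, dotProduct, Pi.smul_apply, smul_eq_mul]]
      push_cast
      rw [Finset.sum_div]
      refine Finset.sum_congr rfl fun i _ => ?_
      have : (A k i : ℝ) = (v (s k) i : ℝ) := by rw [hA]; rfl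
      rw [this]
      field_simp
    rw [hsum, abs_div, abs_of_pos hppos, le_div_iff₀ hppos, one_mul]
    have h5 : ((p : ℤ) : ℝ) ≤ |((A.mulVec (x₀ + (p : ℤ) • x) k : ℤ) : ℝ)| := by
      rw [← Int.cast_abs]
      exact_mod_cast hk
    exact_mod_cast h5
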